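/- arXiv:2206.14139 — 3 statements merged into one kernel-verified Lean document; each statement's English description precedes it below -/
import Mathlib

section
/- Let (X, 𝒜, μ) be a σ-finite measure space, n ≥ 1 an integer, d : X × X → [0,∞) a function, and (n+1)/2 < α < (n+2)/2. Let p : (0,∞) × X × X → [0,∞) be jointly measurable with p_t(x,·) ∈ L²(μ) for all t > 0, x ∈ X, and set P_t f(x) = ∫_X p_t(x,q) f(q) dμ(q). Assume there are constants C₀, C₁ > 0 such that for all f ∈ L²(μ), all t > 0 and all x, y ∈ X: |P_t f(x)| ≤ C₀ t^{−(n+1)/2} ‖f‖_{L²(μ)} and |P_t f(x) − P_t f(y)| ≤ C₁ d(x,y) t^{−(n+2)/2} ‖f‖_{L²(μ)}. Then, with C = (1/Γ(α)) · (2C₀/(α − (n+1)/2) + C₁/((n+2)/2 − α)), one has for all f ∈ L²(μ) and x, y ∈ X: ∫_0^∞ t^{α−1} |P_t f(x) − P_t f(y)| dt < ∞ and (1/Γ(α)) |∫_0^∞ t^{α−1} (P_t f(x) − P_t f(y)) dt| ≤ C · d(x,y)^{2α−(n+1)} · ‖f‖_{L²(μ)}. -/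
open MeasureTheory

/-- Hölder bound for the fractional operator: if `(n+1)/2 < α < (n+2)/2` and the semigroup
`P_t f(x) = ∫ p_t(x,q) f(q) dμ(q)` satisfies the ultracontractivity and regularization bounds,
then with `C = (1/Γ(α))(2C₀/(α−(n+1)/2) + C₁/((n+2)/2−α))`, for all `f ∈ L²(μ)` and `x, y`:
`∫_0^∞ t^{α−1}|P_t f(x) − P_t f(y)| dt < ∞` and
`(1/Γ(α))|∫_0^∞ t^{α−1}(P_t f(x) − P_t f(y)) dt| ≤ C d(x,y)^{2α−(n+1)} ‖f‖_{L²(μ)}`. -/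
theorem frac_operator_holder_bound {X : Type*} [MeasurableSpace X] (μ : Measure X)
    [SigmaFinite μ] (n : ℕ) (hn : 1 ≤ n) (d : X → X → ℝ) (hd : ∀ x y, 0 ≤ d x y)
    (α : ℝ) (hα1 : ((n : ℝ) + 1) / 2 < α) (hα2 : α < ((n : ℝ) + 2) / 2)
    (p : ℝ → X → X → ℝ)
    (hmeas : Measurable fun q : ℝ × X × X => p q.1 q.2.1 q.2.2)
    (hnonneg : ∀ t x y, 0 ≤ p t x y)
    (hL2 : ∀ t : ℝ, 0 < t → ∀ x, MeasureTheory.MemLp (p t x) 2 μ)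
    (C₀ C₁ : ℝ) (hC₀ : 0 < C₀) (hC₁ : 0 < C₁)
    (hultra : ∀ f : X → ℝ, MeasureTheory.MemLp f 2 μ → ∀ t : ℝ, 0 < t → ∀ x,
      |∫ q, p t x q * f q ∂μ| ≤
        C₀ * t ^ (-((n : ℝ) + 1) / 2) * (MeasureTheory.eLpNorm f 2 μ).toReal)
    (hgrad : ∀ f : X → ℝ, MeasureTheory.MemLp f 2 μ → ∀ t : ℝ, 0 < t → ∀ x y,
      |(∫ q, p t x q * f q ∂μ) - ∫ q, p t y q * f q ∂μ| ≤
        C₁ * d x y * t ^ (-((n : ℝ) + 2) / 2) * (MeasureTheory.eLpNorm f 2 μ).toReal)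
    (f : X → ℝ) (hf : MeasureTheory.MemLp f 2 μ) (x y : X) :
    MeasureTheory.IntegrableOn
      (fun t : ℝ => t ^ (α - 1) * |(∫ q, p t x q * f q ∂μ) - ∫ q, p t y q * f q ∂μ|)
      (Set.Ioi 0) ∧
    (Real.Gamma α)⁻¹ *
        |∫ t in Set.Ioi (0 : ℝ),
          t ^ (α - 1) * ((∫ q, p t x q * f q ∂μ) - ∫ q, p t y q * f q ∂μ)| ≤
      (Real.Gamma α)⁻¹ * (2 * C₀ / (α - ((n : ℝ) + 1) / 2) + C₁ / (((n : ℝ) + 2) / 2 - α)) *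
        d x y ^ (2 * α - ((n : ℝ) + 1)) * (MeasureTheory.eLpNorm f 2 μ).toReal := by
  have hn1 : (0:ℝ) < ((n : ℝ) + 1) / 2 := by positivity
  have hα0 : 0 < α := hn1.trans hα1
  have hΓ : 0 < Real.Gamma α := Real.Gamma_pos_of_pos hα0
  set N := (eLpNorm f 2 μ).toReal with hNdef
  have hN0 : 0 ≤ N := ENNReal.toReal_nonneg
  set a : ℝ := α - 1 + -((n : ℝ) + 1) / 2 with hadef
  set b : ℝ := α - 1 + -((n : ℝ) + 2) / 2 with hbdef
  have ha : (-1 : ℝ) < a := by rw [hadef]; linarith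
  have hb : b < -1 := by rw [hbdef]; linarith
  have ha1 : a + 1 = α - ((n : ℝ) + 1) / 2 := by rw [hadef]; ring
  have hb1 : b + 1 = α - ((n : ℝ) + 2) / 2 := by rw [hbdef]; ring
  have ha1pos : 0 < a + 1 := by rw [ha1]; linarith
  have hb1neg : b + 1 < 0 := by rw [hb1]; linarith
  -- measurability of `t ↦ P_t f z`
  obtain ⟨f', hf'sm, hff'⟩ := hf.aestronglyMeasurable
  have hPmeas : ∀ z : X, Measurable fun t : ℝ => ∫ q, p t z q * f q ∂μ := by
    intro z
    have h1 : StronglyMeasurable fun tq : ℝ × X => p tq.1 z tq.2 * f' tq.2 := by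
      apply Measurable.stronglyMeasurable
      exact (hmeas.comp
        (measurable_fst.prodMk (measurable_const.prodMk measurable_snd))).mul
        (hf'sm.measurable.comp measurable_snd)
    have h2 : StronglyMeasurable fun t : ℝ => ∫ q, p t z q * f' q ∂μ :=
      h1.integral_prod_right'
    have heq : (fun t : ℝ => ∫ q, p t z q * f q ∂μ)
        = fun t => ∫ q, p t z q * f' q ∂μ := by
      funext t
      exact integral_congr_ae (hff'.mono fun q hq => by simp only [hq])
    rw [heq]
    exact h2.measurable
  have hgmeas : Measurable fun t : ℝ =>
      (∫ q, p t x q * f q ∂μ) - ∫ q, p t y q * f q ∂μ := (hPmeas x).sub (hPmeas y)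
  have hψmeas : Measurable fun t : ℝ =>
      t ^ (α - 1) * |(∫ q, p t x q * f q ∂μ) - ∫ q, p t y q * f q ∂μ| :=
    (measurable_id.pow_const _).mul hgmeas.abs
  -- pointwise bounds
  have hbound1 : ∀ t : ℝ, 0 < t →
      |(∫ q, p t x q * f q ∂μ) - ∫ q, p t y q * f q ∂μ|
        ≤ 2 * C₀ * t ^ (-((n : ℝ) + 1) / 2) * N := by
    intro t ht
    calc |(∫ q, p t x q * f q ∂μ) - ∫ q, p t y q * f q ∂μ|
        ≤ |∫ q, p t x q * f q ∂μ| + |∫ q, p t y q * f q ∂μ| := abs_sub _ _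
      _ ≤ C₀ * t ^ (-((n : ℝ) + 1) / 2) * N + C₀ * t ^ (-((n : ℝ) + 1) / 2) * N :=
          add_le_add (hultra f hf t ht x) (hultra f hf t ht y)
      _ = 2 * C₀ * t ^ (-((n : ℝ) + 1) / 2) * N := by ring
  have hbound2 : ∀ t : ℝ, 0 < t →
      |(∫ q, p t x q * f q ∂μ) - ∫ q, p t y q * f q ∂μ|
        ≤ C₁ * d x y * t ^ (-((n : ℝ) + 2) / 2) * N := fun t ht => hgrad f hf t ht x y
  rcases eq_or_lt_of_le (hd x y) with hD0 | hD
  · -- degenerate case `d x y = 0`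
    have hzero : ∀ t ∈ Set.Ioi (0:ℝ),
        (∫ q, p t x q * f q ∂μ) - ∫ q, p t y q * f q ∂μ = 0 := by
      intro t ht
      have := hbound2 t ht
      rw [← hD0] at this
      simpa using abs_nonpos_iff.mp (by simpa using this)
    have hEq : Set.EqOn
        (fun t : ℝ => t ^ (α - 1) * |(∫ q, p t x q * f q ∂μ) - ∫ q, p t y q * f q ∂μ|)
        (fun _ : ℝ => (0:ℝ)) (Set.Ioi 0) := by
      intro t ht; simp [hzero t ht]
    have hEq' : Set.EqOn
        (fun t : ℝ => t ^ (α - 1) * ((∫ q, p t x q * f q ∂μ) - ∫ q, p t y q * f q ∂μ))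
        (fun _ : ℝ => (0:ℝ)) (Set.Ioi 0) := by
      intro t ht; simp [hzero t ht]
    constructor
    · exact (integrableOn_congr_fun hEq measurableSet_Ioi).mpr (integrableOn_zero)
    · rw [setIntegral_congr_fun measurableSet_Ioi hEq']
      rw [← hD0, Real.zero_rpow (by intro h; nlinarith)]
      simp
  -- main case `0 < d x y`
  set D := d x y with hDdef
  set T : ℝ := D ^ (2:ℝ) with hTdef
  have hT : 0 < T := Real.rpow_pos_of_pos hD 2
  -- integrable comparison functions
  have hia : IntegrableOn (fun t : ℝ => 2 * C₀ * N * t ^ a) (Set.Ioc 0 T) :=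
    ((intervalIntegrable_iff_integrableOn_Ioc_of_le hT.le).mp
      (intervalIntegral.intervalIntegrable_rpow' ha)).const_mul _
  have hib : IntegrableOn (fun t : ℝ => C₁ * D * N * t ^ b) (Set.Ioi T) :=
    (integrableOn_Ioi_rpow_of_lt hb hT).const_mul _
  -- pointwise domination on each piece
  have hdom1 : ∀ t ∈ Set.Ioc (0:ℝ) T,
      t ^ (α - 1) * |(∫ q, p t x q * f q ∂μ) - ∫ q, p t y q * f q ∂μ|
        ≤ 2 * C₀ * N * t ^ a := by
    intro t ht
    have ht0 : 0 < t := ht.1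
    calc t ^ (α - 1) * |(∫ q, p t x q * f q ∂μ) - ∫ q, p t y q * f q ∂μ|
        ≤ t ^ (α - 1) * (2 * C₀ * t ^ (-((n : ℝ) + 1) / 2) * N) :=
          mul_le_mul_of_nonneg_left (hbound1 t ht0) (Real.rpow_nonneg ht0.le _)
      _ = 2 * C₀ * N * (t ^ (α - 1) * t ^ (-((n : ℝ) + 1) / 2)) := by ring
      _ = 2 * C₀ * N * t ^ a := by rw [← Real.rpow_add ht0, hadef]
  have hdom2 : ∀ t ∈ Set.Ioi T,
      t ^ (α - 1) * |(∫ q, p t x q * f q ∂μ) - ∫ q, p t y q * f q ∂μ|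
        ≤ C₁ * D * N * t ^ b := by
    intro t ht
    have ht0 : 0 < t := hT.trans ht
    calc t ^ (α - 1) * |(∫ q, p t x q * f q ∂μ) - ∫ q, p t y q * f q ∂μ|
        ≤ t ^ (α - 1) * (C₁ * D * t ^ (-((n : ℝ) + 2) / 2) * N) :=
          mul_le_mul_of_nonneg_left (hbound2 t ht0) (Real.rpow_nonneg ht0.le _)
      _ = C₁ * D * N * (t ^ (α - 1) * t ^ (-((n : ℝ) + 2) / 2)) := by ring
      _ = C₁ * D * N * t ^ b := by rw [← Real.rpow_add ht0, hbdef]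
  -- integrability on the two pieces
  have hψnn : ∀ t ∈ Set.Ioi (0:ℝ),
      0 ≤ t ^ (α - 1) * |(∫ q, p t x q * f q ∂μ) - ∫ q, p t y q * f q ∂μ| := by
    intro t ht
    exact mul_nonneg (Real.rpow_nonneg (le_of_lt ht) _) (abs_nonneg _)
  have hIoc : IntegrableOn
      (fun t : ℝ => t ^ (α - 1) * |(∫ q, p t x q * f q ∂μ) - ∫ q, p t y q * f q ∂μ|)
      (Set.Ioc 0 T) := by
    refine Integrable.mono' hia hψmeas.aestronglyMeasurable.restrict ?_
    rw [ae_restrict_iff' measurableSet_Ioc]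
    filter_upwards with t ht
    rw [Real.norm_eq_abs, abs_of_nonneg (hψnn t ht.1)]
    exact hdom1 t ht
  have hIoi : IntegrableOn
      (fun t : ℝ => t ^ (α - 1) * |(∫ q, p t x q * f q ∂μ) - ∫ q, p t y q * f q ∂μ|)
      (Set.Ioi T) := by
    refine Integrable.mono' hib hψmeas.aestronglyMeasurable.restrict ?_
    rw [ae_restrict_iff' measurableSet_Ioi]
    filter_upwards with t ht
    rw [Real.norm_eq_abs, abs_of_nonneg (hψnn t (hT.trans ht))]
    exact hdom2 t ht
  have hunion : Set.Ioc (0:ℝ) T ∪ Set.Ioi T = Set.Ioi 0 := Set.Ioc_union_Ioi_eq_Ioi hT.le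
  have hInt : IntegrableOn
      (fun t : ℝ => t ^ (α - 1) * |(∫ q, p t x q * f q ∂μ) - ∫ q, p t y q * f q ∂μ|)
      (Set.Ioi 0) := by
    rw [← hunion]; exact hIoc.union hIoi
  refine ⟨hInt, ?_⟩
  -- exact values of the comparison integrals
  have hi1 : ∫ t in Set.Ioc (0:ℝ) T, 2 * C₀ * N * t ^ a
      = 2 * C₀ * N * (T ^ (a+1) / (a+1)) := by
    rw [MeasureTheory.integral_const_mul, ← intervalIntegral.integral_of_le hT.le,
      integral_rpow (Or.inl ha), Real.zero_rpow (ne_of_gt ha1pos)]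
    ring
  have hi2 : ∫ t in Set.Ioi T, C₁ * D * N * t ^ b
      = C₁ * D * N * (-T ^ (b+1) / (b+1)) := by
    rw [MeasureTheory.integral_const_mul, integral_Ioi_rpow_of_lt hb hT]
  -- rpow algebra
  have hTa : T ^ (a+1) = D ^ (2 * α - ((n:ℝ)+1)) := by
    rw [hTdef, ← Real.rpow_mul hD.le]
    congr 1
    rw [ha1]; push_cast; ring
  have hTb : D * T ^ (b+1) = D ^ (2 * α - ((n:ℝ)+1)) := by
    rw [hTdef, ← Real.rpow_mul hD.le]
    nth_rewrite 1 [← Real.rpow_one D]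
    rw [← Real.rpow_add hD]
    congr 1
    rw [hb1]; push_cast; ring
  -- the main estimate on the absolute integral
  have hkey : |∫ t in Set.Ioi (0:ℝ),
        t ^ (α - 1) * ((∫ q, p t x q * f q ∂μ) - ∫ q, p t y q * f q ∂μ)|
      ≤ (2 * C₀ / (α - ((n : ℝ) + 1) / 2) + C₁ / (((n : ℝ) + 2) / 2 - α)) *
          D ^ (2 * α - ((n:ℝ)+1)) * N := by
    have step1 : |∫ t in Set.Ioi (0:ℝ),
          t ^ (α - 1) * ((∫ q, p t x q * f q ∂μ) - ∫ q, p t y q * f q ∂μ)|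
        ≤ ∫ t in Set.Ioi (0:ℝ),
            t ^ (α - 1) * |(∫ q, p t x q * f q ∂μ) - ∫ q, p t y q * f q ∂μ| := by
      have := MeasureTheory.norm_integral_le_integral_norm
        (μ := volume.restrict (Set.Ioi (0:ℝ)))
        (f := fun t : ℝ => t ^ (α - 1) * ((∫ q, p t x q * f q ∂μ) - ∫ q, p t y q * f q ∂μ))
      rw [Real.norm_eq_abs] at this
      refine this.trans (le_of_eq ?_)
      refine setIntegral_congr_fun measurableSet_Ioi fun t ht => ?_
      rw [Real.norm_eq_abs, abs_mul, abs_of_nonneg (Real.rpow_nonneg (le_of_lt ht) _)]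
    have split : ∫ t in Set.Ioi (0:ℝ),
          t ^ (α - 1) * |(∫ q, p t x q * f q ∂μ) - ∫ q, p t y q * f q ∂μ|
        = (∫ t in Set.Ioc (0:ℝ) T,
            t ^ (α - 1) * |(∫ q, p t x q * f q ∂μ) - ∫ q, p t y q * f q ∂μ|)
          + ∫ t in Set.Ioi T,
            t ^ (α - 1) * |(∫ q, p t x q * f q ∂μ) - ∫ q, p t y q * f q ∂μ| := by
      rw [← hunion, setIntegral_union (Set.Ioc_disjoint_Ioi le_rfl) measurableSet_Ioi hIoc hIoi]
    have est1 : ∫ t in Set.Ioc (0:ℝ) T,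
          t ^ (α - 1) * |(∫ q, p t x q * f q ∂μ) - ∫ q, p t y q * f q ∂μ|
        ≤ 2 * C₀ * N * (T ^ (a+1) / (a+1)) := by
      rw [← hi1]
      exact setIntegral_mono_on hIoc hia measurableSet_Ioc hdom1
    have est2 : ∫ t in Set.Ioi T,
          t ^ (α - 1) * |(∫ q, p t x q * f q ∂μ) - ∫ q, p t y q * f q ∂μ|
        ≤ C₁ * D * N * (-T ^ (b+1) / (b+1)) := by
      rw [← hi2]
      exact setIntegral_mono_on hIoi hib measurableSet_Ioi hdom2
    have final : 2 * C₀ * N * (T ^ (a+1) / (a+1)) + C₁ * D * N * (-T ^ (b+1) / (b+1))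
        = (2 * C₀ / (α - ((n : ℝ) + 1) / 2) + C₁ / (((n : ℝ) + 2) / 2 - α)) *
            D ^ (2 * α - ((n:ℝ)+1)) * N := by
      have h1 : 2 * C₀ * N * (T ^ (a+1) / (a+1))
          = 2 * C₀ / (α - ((n : ℝ) + 1) / 2) * D ^ (2 * α - ((n:ℝ)+1)) * N := by
        rw [← hTa, ha1]; ring
      have h2 : C₁ * D * N * (-T ^ (b+1) / (b+1))
          = C₁ / (((n : ℝ) + 2) / 2 - α) * D ^ (2 * α - ((n:ℝ)+1)) * N := by
        rw [← hTb, hb1,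
          show α - (((n:ℝ)+2)/2) = -((((n:ℝ)+2)/2) - α) by ring, div_neg]
        ring
      rw [h1, h2]; ring
    calc |∫ t in Set.Ioi (0:ℝ),
          t ^ (α - 1) * ((∫ q, p t x q * f q ∂μ) - ∫ q, p t y q * f q ∂μ)|
        ≤ ∫ t in Set.Ioi (0:ℝ),
            t ^ (α - 1) * |(∫ q, p t x q * f q ∂μ) - ∫ q, p t y q * f q ∂μ| := step1
      _ ≤ 2 * C₀ * N * (T ^ (a+1) / (a+1)) + C₁ * D * N * (-T ^ (b+1) / (b+1)) := by
          rw [split]; exact add_le_add est1 est2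
      _ = _ := final
  calc (Real.Gamma α)⁻¹ *
        |∫ t in Set.Ioi (0:ℝ),
          t ^ (α - 1) * ((∫ q, p t x q * f q ∂μ) - ∫ q, p t y q * f q ∂μ)|
      ≤ (Real.Gamma α)⁻¹ *
          ((2 * C₀ / (α - ((n : ℝ) + 1) / 2) + C₁ / (((n : ℝ) + 2) / 2 - α)) *
            D ^ (2 * α - ((n:ℝ)+1)) * N) :=
        mul_le_mul_of_nonneg_left hkey (inv_nonneg.mpr hΓ.le)
    _ = _ := by rw [hDdef, hNdef]; ring
end

section
/- Let (X, 𝒜, μ) be a σ-finite measure space, n ≥ 1 an integer, d : X × X → [0,∞) a function, and (n+1)/2 < α < (n+2)/2. Let p : (0,∞) × X × X → [0,∞) be jointly measurable with p_t(x,·) ∈ L²(μ) for all t > 0, x ∈ X, and set P_t f(x) = ∫_X p_t(x,q) f(q) dμ(q). Assume there are constants C₀, C₁ > 0 such that for all f ∈ L²(μ), all t > 0 and all x, y ∈ X: |P_t f(x)| ≤ C₀ t^{−(n+1)/2} ‖f‖_{L²(μ)} and |P_t f(x) − P_t f(y)| ≤ C₁ d(x,y) t^{−(n+2)/2} ‖f‖_{L²(μ)}.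 Then, with C = (1/Γ(α)) · (2C₀/(α − (n+1)/2) + C₁/((n+2)/2 − α)), for all x, y ∈ X there exists h ∈ L²(μ) with ‖h‖_{L²(μ)} ≤ C · d(x,y)^{2α−(n+1)} such that ∫_X h f dμ = (1/Γ(α)) ∫_0^∞ t^{α−1} (P_t f(x) − P_t f(y)) dt for every f ∈ L²(μ). -/
open MeasureTheory

/-- Riesz-representation form of the kernel estimate: under the same hypotheses as the Hölder
bound for the fractional operator, for all `x, y` there exists `h ∈ L²(μ)` with
`‖h‖_{L²(μ)} ≤ C d(x,y)^{2α−(n+1)}` representing the bounded linear functional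
`f ↦ (1/Γ(α)) ∫_0^∞ t^{α−1}(P_t f(x) − P_t f(y)) dt` on `L²(μ)`, where
`C = (1/Γ(α))(2C₀/(α−(n+1)/2) + C₁/((n+2)/2−α))`. -/
theorem frac_kernel_L2_difference {X : Type*} [MeasurableSpace X] (μ : Measure X)
    [SigmaFinite μ] (n : ℕ) (hn : 1 ≤ n) (d : X → X → ℝ) (hd : ∀ x y, 0 ≤ d x y)
    (α : ℝ) (hα1 : ((n : ℝ) + 1) / 2 < α) (hα2 : α < ((n : ℝ) + 2) / 2)
    (p : ℝ → X → X → ℝ)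
    (hmeas : Measurable fun q : ℝ × X × X => p q.1 q.2.1 q.2.2)
    (hnonneg : ∀ t x y, 0 ≤ p t x y)
    (hL2 : ∀ t : ℝ, 0 < t → ∀ x, MeasureTheory.MemLp (p t x) 2 μ)
    (C₀ C₁ : ℝ) (hC₀ : 0 < C₀) (hC₁ : 0 < C₁)
    (hultra : ∀ f : X → ℝ, MeasureTheory.MemLp f 2 μ → ∀ t : ℝ, 0 < t → ∀ x,
      |∫ q, p t x q * f q ∂μ| ≤
        C₀ * t ^ (-((n : ℝ) + 1) / 2) * (MeasureTheory.eLpNorm f 2 μ).toReal)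
    (hgrad : ∀ f : X → ℝ, MeasureTheory.MemLp f 2 μ → ∀ t : ℝ, 0 < t → ∀ x y,
      |(∫ q, p t x q * f q ∂μ) - ∫ q, p t y q * f q ∂μ| ≤
        C₁ * d x y * t ^ (-((n : ℝ) + 2) / 2) * (MeasureTheory.eLpNorm f 2 μ).toReal)
    (x y : X) :
    ∃ h : X → ℝ, MeasureTheory.MemLp h 2 μ ∧
      (MeasureTheory.eLpNorm h 2 μ).toReal ≤
        (Real.Gamma α)⁻¹ * (2 * C₀ / (α - ((n : ℝ) + 1) / 2) + C₁ / (((n : ℝ) + 2) / 2 - α)) *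
          d x y ^ (2 * α - ((n : ℝ) + 1)) ∧
      ∀ f : X → ℝ, MeasureTheory.MemLp f 2 μ →
        (∫ q, h q * f q ∂μ) =
          (Real.Gamma α)⁻¹ * ∫ t in Set.Ioi (0 : ℝ),
            t ^ (α - 1) * ((∫ q, p t x q * f q ∂μ) - ∫ q, p t y q * f q ∂μ) := by
  have hn1 : (1 : ℝ) ≤ (n : ℝ) := by exact_mod_cast hn
  have hα0 : (0 : ℝ) < α := lt_trans (by positivity) hα1
  have hΓ : 0 < Real.Gamma α := Real.Gamma_pos_of_pos hα0
  have hA1 : (0 : ℝ) < α - ((n : ℝ) + 1) / 2 := by linarith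
  have hA2 : (0 : ℝ) < ((n : ℝ) + 2) / 2 - α := by linarith
  -- integrability of products of kernels with L² functions
  have hone : (1 : ENNReal) / 1 = 1 / 2 + 1 / 2 := by simp [one_div, ENNReal.inv_two_add_inv_two]
  have hint : ∀ t : ℝ, 0 < t → ∀ z : X, ∀ f : X → ℝ, MemLp f 2 μ →
      Integrable (fun q => p t z q * f q) μ := by
    intro t ht z f hf
    have h1 : MemLp ((p t z) • f) 1 μ := hf.smul (hL2 t ht z) (hpqr := ⟨by simp [ENNReal.inv_two_add_inv_two]⟩)
    rw [memLp_one_iff_integrable] at h1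
    exact h1
  -- strong measurability in t of the inner integrals
  have hsm : ∀ z : X, ∀ f : X → ℝ, MemLp f 2 μ →
      StronglyMeasurable (fun t : ℝ => ∫ q, p t z q * f q ∂μ) := by
    intro z f hf
    have hmk : Measurable (hf.1.mk f) := hf.1.stronglyMeasurable_mk.measurable
    have h1 : Measurable (fun tq : ℝ × X => p tq.1 z tq.2 * hf.1.mk f tq.2) := by
      have h2 : Measurable (fun tq : ℝ × X => p tq.1 z tq.2) :=
        hmeas.comp (measurable_fst.prodMk (measurable_const.prodMk measurable_snd))
      exact h2.mul (hmk.comp measurable_snd)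
    have h2 : StronglyMeasurable (fun t : ℝ => ∫ q, p t z q * hf.1.mk f q ∂μ) :=
      h1.stronglyMeasurable.integral_prod_right'
    have h3 : (fun t : ℝ => ∫ q, p t z q * f q ∂μ)
        = fun t : ℝ => ∫ q, p t z q * hf.1.mk f q ∂μ := by
      funext t
      refine integral_congr_ae ?_
      filter_upwards [hf.1.ae_eq_mk] with q hq
      rw [hq]
    rw [h3]; exact h2
  rcases eq_or_lt_of_le (hd x y) with hD0 | hDpos
  · -- degenerate case `d x y = 0`
    refine ⟨0, MemLp.zero, ?_, ?_⟩
    · simp only [eLpNorm_zero, ENNReal.toReal_zero]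
      have hc : (0 : ℝ) ≤ 2 * C₀ / (α - ((n : ℝ) + 1) / 2) + C₁ / (((n : ℝ) + 2) / 2 - α) :=
        add_nonneg (le_of_lt (div_pos (by linarith) hA1)) (le_of_lt (div_pos hC₁ hA2))
      have := Real.rpow_nonneg (hd x y) (2 * α - ((n : ℝ) + 1))
      positivity
    · intro f hf
      have hzero : Set.EqOn
          (fun t : ℝ => t ^ (α - 1) * ((∫ q, p t x q * f q ∂μ) - ∫ q, p t y q * f q ∂μ))
          (fun _ => (0 : ℝ)) (Set.Ioi 0) := by
        intro t ht
        have h1 := hgrad f hf t ht x y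
        rw [← hD0, mul_zero, zero_mul, zero_mul] at h1
        have h2 : (∫ q, p t x q * f q ∂μ) - ∫ q, p t y q * f q ∂μ = 0 :=
          abs_nonpos_iff.mp h1
        simp [h2]
      rw [setIntegral_congr_fun measurableSet_Ioi hzero]
      simp
  -- main case `0 < d x y`
  set D := d x y with hD
  set T := D ^ (2 : ℝ) with hT
  have hTpos : 0 < T := Real.rpow_pos_of_pos hDpos 2
  set e₁ := α - 1 + -((n : ℝ) + 1) / 2 with he₁def
  set e₂ := α - 1 + -((n : ℝ) + 2) / 2 with he₂def
  have he₁ : (-1 : ℝ) < e₁ := by rw [he₁def]; linarith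
  have he₂ : e₂ < (-1 : ℝ) := by rw [he₂def]; linarith
  have he1v : e₁ + 1 = α - ((n : ℝ) + 1) / 2 := by rw [he₁def]; ring
  have he2v : e₂ + 1 = α - ((n : ℝ) + 2) / 2 := by rw [he₂def]; ring
  set B : ℝ → ℝ := fun t => if t ≤ T then 2 * C₀ * t ^ e₁ else C₁ * D * t ^ e₂ with hB
  have hBeq1 : Set.EqOn B (fun t => 2 * C₀ * t ^ e₁) (Set.Ioc 0 T) := fun t ht => if_pos ht.2
  have hBeq2 : Set.EqOn B (fun t => C₁ * D * t ^ e₂) (Set.Ioi T) :=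
    fun t ht => if_neg (not_le.mpr ht)
  have hBint1 : IntegrableOn (fun t => 2 * C₀ * t ^ e₁) (Set.Ioc 0 T) := by
    have h1 := intervalIntegral.intervalIntegrable_rpow' (a := 0) (b := T) he₁
    rw [intervalIntegrable_iff_integrableOn_Ioc_of_le hTpos.le] at h1
    exact h1.const_mul _
  have hBint2 : IntegrableOn (fun t => C₁ * D * t ^ e₂) (Set.Ioi T) :=
    (integrableOn_Ioi_rpow_of_lt he₂ hTpos).const_mul _
  have hBintOn1 : IntegrableOn B (Set.Ioc 0 T) :=
    hBint1.congr_fun (fun t ht => (hBeq1 ht).symm) measurableSet_Ioc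
  have hBintOn2 : IntegrableOn B (Set.Ioi T) :=
    hBint2.congr_fun (fun t ht => (hBeq2 ht).symm) measurableSet_Ioi
  have hunion : Set.Ioc (0 : ℝ) T ∪ Set.Ioi T = Set.Ioi 0 := Set.Ioc_union_Ioi_eq_Ioi hTpos.le
  have hBintOn : IntegrableOn B (Set.Ioi 0) := by
    rw [← hunion]; exact hBintOn1.union hBintOn2
  have hIoc : ∫ t in Set.Ioc (0 : ℝ) T, B t = 2 * C₀ * (T ^ (e₁ + 1) / (e₁ + 1)) := by
    rw [setIntegral_congr_fun measurableSet_Ioc hBeq1, ← intervalIntegral.integral_of_le hTpos.le,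
      intervalIntegral.integral_const_mul, integral_rpow (Or.inl he₁),
      Real.zero_rpow (by linarith : e₁ + 1 ≠ 0)]
    ring
  have hIoi : ∫ t in Set.Ioi T, B t = C₁ * D * (-T ^ (e₂ + 1) / (e₂ + 1)) := by
    rw [setIntegral_congr_fun measurableSet_Ioi hBeq2, MeasureTheory.integral_const_mul,
      integral_Ioi_rpow_of_lt he₂ hTpos]
  have hBval : ∫ t in Set.Ioi (0 : ℝ), B t
      = (2 * C₀ / (α - ((n : ℝ) + 1) / 2) + C₁ / (((n : ℝ) + 2) / 2 - α))
          * D ^ (2 * α - ((n : ℝ) + 1)) := by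
    rw [← hunion, setIntegral_union (Set.Ioc_disjoint_Ioi le_rfl) measurableSet_Ioi
      hBintOn1 hBintOn2, hIoc, hIoi]
    have h1 : T ^ (e₁ + 1) = D ^ (2 * α - ((n : ℝ) + 1)) := by
      rw [hT, ← Real.rpow_mul hDpos.le]
      congr 1
      rw [he₁def]; ring
    have h2 : D * T ^ (e₂ + 1) = D ^ (2 * α - ((n : ℝ) + 1)) := by
      calc D * T ^ (e₂ + 1) = D ^ (1 : ℝ) * D ^ (2 * (e₂ + 1)) := by
            rw [Real.rpow_one, hT, ← Real.rpow_mul hDpos.le]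
        _ = D ^ (1 + 2 * (e₂ + 1)) := (Real.rpow_add hDpos _ _).symm
        _ = D ^ (2 * α - ((n : ℝ) + 1)) := by congr 1; rw [he₂def]; ring
    have h3 : C₁ * D * (-T ^ (e₂ + 1) / (e₂ + 1))
        = C₁ * (D * T ^ (e₂ + 1)) / (((n : ℝ) + 2) / 2 - α) := by
      rw [show (((n : ℝ) + 2) / 2 - α) = -(α - ((n : ℝ) + 2) / 2) by ring, div_neg, he2v]
      ring
    rw [h1, h3, h2, he1v]
    ring
  -- pointwise bound for the integrand
  have hFb : ∀ f : X → ℝ, MemLp f 2 μ → ∀ t ∈ Set.Ioi (0 : ℝ),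
      |t ^ (α - 1) * ((∫ q, p t x q * f q ∂μ) - ∫ q, p t y q * f q ∂μ)|
        ≤ B t * (eLpNorm f 2 μ).toReal := by
    intro f hf t ht
    have ht' : (0 : ℝ) < t := ht
    have htp : 0 ≤ t ^ (α - 1) := Real.rpow_nonneg ht'.le _
    rw [abs_mul, abs_of_nonneg htp]
    simp only [hB]
    by_cases hcase : t ≤ T
    · rw [if_pos hcase]
      have h1 := hultra f hf t ht' x
      have h2 := hultra f hf t ht' y
      have h3 : |(∫ q, p t x q * f q ∂μ) - ∫ q, p t y q * f q ∂μ|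
          ≤ |∫ q, p t x q * f q ∂μ| + |∫ q, p t y q * f q ∂μ| := abs_sub _ _
      calc t ^ (α - 1) * |(∫ q, p t x q * f q ∂μ) - ∫ q, p t y q * f q ∂μ|
          ≤ t ^ (α - 1) * (2 * C₀ * t ^ (-((n : ℝ) + 1) / 2) * (eLpNorm f 2 μ).toReal) := by
            refine mul_le_mul_of_nonneg_left ?_ htp
            linarith
        _ = 2 * C₀ * t ^ e₁ * (eLpNorm f 2 μ).toReal := by
            rw [he₁def, Real.rpow_add ht']; ring
    · rw [if_neg hcase]
      have h1 := hgrad f hf t ht' x y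
      calc t ^ (α - 1) * |(∫ q, p t x q * f q ∂μ) - ∫ q, p t y q * f q ∂μ|
          ≤ t ^ (α - 1) * (C₁ * D * t ^ (-((n : ℝ) + 2) / 2) * (eLpNorm f 2 μ).toReal) :=
            mul_le_mul_of_nonneg_left h1 htp
        _ = C₁ * D * t ^ e₂ * (eLpNorm f 2 μ).toReal := by
            rw [he₂def, Real.rpow_add ht']; ring
  -- integrability of the t-integrand
  have hFmeas : ∀ f : X → ℝ, MemLp f 2 μ →
      AEStronglyMeasurable
        (fun t => t ^ (α - 1) * ((∫ q, p t x q * f q ∂μ) - ∫ q, p t y q * f q ∂μ))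
        (volume.restrict (Set.Ioi 0)) := by
    intro f hf
    exact (((measurable_id.pow_const (α - 1)).stronglyMeasurable.mul
      ((hsm x f hf).sub (hsm y f hf))).aestronglyMeasurable).restrict
  have hFint : ∀ f : X → ℝ, MemLp f 2 μ →
      IntegrableOn
        (fun t => t ^ (α - 1) * ((∫ q, p t x q * f q ∂μ) - ∫ q, p t y q * f q ∂μ))
        (Set.Ioi 0) := by
    intro f hf
    refine Integrable.mono' (hBintOn.mul_const ((eLpNorm f 2 μ).toReal)) (hFmeas f hf) ?_
    filter_upwards [ae_restrict_mem measurableSet_Ioi] with t ht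
    simpa [Real.norm_eq_abs, abs_mul] using hFb f hf t ht
  -- the bounded linear functional
  set Φlin : Lp ℝ 2 μ →ₗ[ℝ] ℝ :=
    { toFun := fun f => (Real.Gamma α)⁻¹ * ∫ t in Set.Ioi (0 : ℝ),
        t ^ (α - 1) * ((∫ q, p t x q * (f : X → ℝ) q ∂μ) - ∫ q, p t y q * (f : X → ℝ) q ∂μ)
      map_add' := by
        intro f g
        have hfg : ∀ z : X, ∀ t ∈ Set.Ioi (0 : ℝ),
            (∫ q, p t z q * ((f + g : Lp ℝ 2 μ) : X → ℝ) q ∂μ)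
              = (∫ q, p t z q * (f : X → ℝ) q ∂μ) + ∫ q, p t z q * (g : X → ℝ) q ∂μ := by
          intro z t ht
          have h1 : (fun q => p t z q * ((f + g : Lp ℝ 2 μ) : X → ℝ) q)
              =ᵐ[μ] fun q => p t z q * (f : X → ℝ) q + p t z q * (g : X → ℝ) q := by
            filter_upwards [Lp.coeFn_add f g] with q hq
            rw [hq]; simp [mul_add]
          rw [integral_congr_ae h1,
            integral_add (hint t ht z _ (Lp.memLp f)) (hint t ht z _ (Lp.memLp g))]
        rw [← mul_add]
        congr 1
        rw [← integral_add (hFint _ (Lp.memLp f)) (hFint _ (Lp.memLp g))]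
        refine setIntegral_congr_fun measurableSet_Ioi fun t ht => ?_
        rw [hfg x t ht, hfg y t ht]; ring
      map_smul' := by
        intro c f
        have hfg : ∀ z : X, ∀ t ∈ Set.Ioi (0 : ℝ),
            (∫ q, p t z q * ((c • f : Lp ℝ 2 μ) : X → ℝ) q ∂μ)
              = c * ∫ q, p t z q * (f : X → ℝ) q ∂μ := by
          intro z t ht
          have h1 : (fun q => p t z q * ((c • f : Lp ℝ 2 μ) : X → ℝ) q)
              =ᵐ[μ] fun q => c * (p t z q * (f : X → ℝ) q) := by
            filter_upwards [Lp.coeFn_smul c f] with q hq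
            rw [hq]; simp [smul_eq_mul]; ring
          rw [integral_congr_ae h1, integral_const_mul]
        simp only [RingHom.id_apply, smul_eq_mul]
        have h2 : (∫ t in Set.Ioi (0 : ℝ),
            t ^ (α - 1) * ((∫ q, p t x q * ((c • f : Lp ℝ 2 μ) : X → ℝ) q ∂μ)
              - ∫ q, p t y q * ((c • f : Lp ℝ 2 μ) : X → ℝ) q ∂μ))
            = c * ∫ t in Set.Ioi (0 : ℝ),
                t ^ (α - 1) * ((∫ q, p t x q * (f : X → ℝ) q ∂μ)
                  - ∫ q, p t y q * (f : X → ℝ) q ∂μ) := by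
          rw [← integral_const_mul]
          refine setIntegral_congr_fun measurableSet_Ioi fun t ht => ?_
          rw [hfg x t ht, hfg y t ht]; ring
        rw [h2]; ring } with hΦlin
  set Cst : ℝ := (Real.Gamma α)⁻¹ * ((2 * C₀ / (α - ((n : ℝ) + 1) / 2)
      + C₁ / (((n : ℝ) + 2) / 2 - α)) * D ^ (2 * α - ((n : ℝ) + 1))) with hCst
  have hCstnn : 0 ≤ Cst := by
    rw [hCst]
    have hc : (0 : ℝ) ≤ 2 * C₀ / (α - ((n : ℝ) + 1) / 2) + C₁ / (((n : ℝ) + 2) / 2 - α) :=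
      add_nonneg (le_of_lt (div_pos (by linarith) hA1)) (le_of_lt (div_pos hC₁ hA2))
    have hr := Real.rpow_nonneg hDpos.le (2 * α - ((n : ℝ) + 1))
    positivity
  have hLbound : ∀ f : Lp ℝ 2 μ, ‖Φlin f‖ ≤ Cst * ‖f‖ := by
    intro f
    have hmem := Lp.memLp f
    simp only [hΦlin, LinearMap.coe_mk, AddHom.coe_mk, Real.norm_eq_abs]
    rw [abs_mul, abs_of_pos (inv_pos.mpr hΓ), hCst, mul_assoc, mul_assoc]
    refine mul_le_mul_of_nonneg_left ?_ (inv_nonneg.mpr hΓ.le)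
    have step1 : |∫ t in Set.Ioi (0 : ℝ),
        t ^ (α - 1) * ((∫ q, p t x q * (f : X → ℝ) q ∂μ) - ∫ q, p t y q * (f : X → ℝ) q ∂μ)|
        ≤ ∫ t in Set.Ioi (0 : ℝ), B t * (eLpNorm (f : X → ℝ) 2 μ).toReal := by
      rw [← Real.norm_eq_abs]
      refine norm_integral_le_of_norm_le (hBintOn.mul_const _) ?_
      filter_upwards [ae_restrict_mem measurableSet_Ioi] with t ht
      simpa [Real.norm_eq_abs, abs_mul] using hFb _ hmem t ht
    refine le_trans step1 (le_of_eq ?_)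
    rw [integral_mul_const, hBval, Lp.norm_def]
    ring
  set Φ : Lp ℝ 2 μ →L[ℝ] ℝ := Φlin.mkContinuous Cst hLbound with hΦ
  set h0 : Lp ℝ 2 μ := (InnerProductSpace.toDual ℝ (Lp ℝ 2 μ)).symm Φ with hh0
  refine ⟨⇑h0, Lp.memLp h0, ?_, ?_⟩
  · rw [← Lp.norm_def]
    have h2 : ‖h0‖ = ‖Φ‖ := LinearIsometryEquiv.norm_map _ Φ
    rw [h2, hΦ]
    refine le_trans (Φlin.mkContinuous_norm_le hCstnn hLbound) (le_of_eq ?_)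
    rw [hCst]; ring
  · intro f hf
    have hcoe : (hf.toLp f : X → ℝ) =ᵐ[μ] f := hf.coeFn_toLp
    set fL : Lp ℝ 2 μ := hf.toLp f with hfL
    have e1 : (∫ q, h0 q * f q ∂μ) = ∫ q, h0 q * fL q ∂μ := by
      refine integral_congr_ae ?_
      filter_upwards [hcoe] with q hq
      rw [hq]
    have e2 : (∫ q, h0 q * fL q ∂μ) = Φ fL := by
      rw [← InnerProductSpace.toDual_symm_apply (𝕜 := ℝ) (y := Φ) (x := fL)]
      rw [← hh0, L2.inner_def]
      refine integral_congr_ae (Filter.Eventually.of_forall fun q => ?_)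
      simp [RCLike.inner_apply, RCLike.conj_to_real, mul_comm]
    have e4 : ∀ z : X, ∀ t : ℝ, ∫ q, p t z q * fL q ∂μ = ∫ q, p t z q * f q ∂μ := by
      intro z t
      refine integral_congr_ae ?_
      filter_upwards [hcoe] with q hq
      rw [hq]
    have e3 : Φ fL = (Real.Gamma α)⁻¹ * ∫ t in Set.Ioi (0 : ℝ),
        t ^ (α - 1) * ((∫ q, p t x q * f q ∂μ) - ∫ q, p t y q * f q ∂μ) := by
      rw [hΦ]
      rw [LinearMap.mkContinuous_apply]
      simp only [hΦlin, LinearMap.coe_mk, AddHom.coe_mk]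
      congr 1
      refine setIntegral_congr_fun measurableSet_Ioi fun t ht => ?_
      rw [e4 x t, e4 y t]
    rw [e1, e2, e3]
end

section
/- Let n ≥ 1 be an integer, (n+1)/2 < α < (n+2)/2, and let C > 0 and C₄ > 0. Set ρ = (2α − n)/(2 − (2α − n)); note 1 < ρ < ∞. Then there exist constants C₁, C₂ > 0 such that for every t ≥ 1, ∫_0^∞ r^{2n+1} exp( C t^{2α−n} r^{4α−2(n+1)} − C₄ r² ) dr ≤ C₁ exp( C₂ t^ρ ). -/
open MeasureTheory ENNReal

/-- Laplace-method bound: for an integer `n ≥ 1`, `(n+1)/2 < α < (n+2)/2` and `C, C₄ > 0`,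
with `ρ = (2α−n)/(2−(2α−n))` one has `1 < ρ`, and there exist `C₁, C₂ > 0` such that for
every `t ≥ 1`:
`∫_0^∞ r^{2n+1} exp(C t^{2α−n} r^{4α−2(n+1)} − C₄ r²) dr ≤ C₁ exp(C₂ t^ρ)`. -/
theorem laplace_method_bound (n : ℕ) (hn : 1 ≤ n) (α C C₄ : ℝ)
    (hα1 : ((n : ℝ) + 1) / 2 < α) (hα2 : α < ((n : ℝ) + 2) / 2)
    (hC : 0 < C) (hC₄ : 0 < C₄) :
    1 < (2 * α - (n : ℝ)) / (2 - (2 * α - (n : ℝ))) ∧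
    ∃ C₁ : ℝ, 0 < C₁ ∧ ∃ C₂ : ℝ, 0 < C₂ ∧ ∀ t : ℝ, 1 ≤ t →
      (∫⁻ r in Set.Ioi (0 : ℝ), ENNReal.ofReal (r ^ (2 * n + 1) *
          Real.exp (C * t ^ (2 * α - (n : ℝ)) * r ^ (4 * α - 2 * ((n : ℝ) + 1)) -
            C₄ * r ^ 2))) ≤
        ENNReal.ofReal (C₁ *
          Real.exp (C₂ * t ^ ((2 * α - (n : ℝ)) / (2 - (2 * α - (n : ℝ)))))) := by
  have hD1 : 1 < 2 * α - (n : ℝ) := by linarith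
  have hD2 : 2 * α - (n : ℝ) < 2 := by linarith
  set D : ℝ := 2 * α - (n : ℝ) with hD
  set β : ℝ := 4 * α - 2 * ((n : ℝ) + 1) with hβ
  have hβD : β = 2 * D - 2 := by rw [hβ, hD]; ring
  have hβ0 : 0 < β := by rw [hβD]; linarith
  have hβ2 : β < 2 := by rw [hβD]; linarith
  constructor
  · rw [one_lt_div (by linarith : (0:ℝ) < 2 - D)]; linarith
  -- conjugate exponents
  set p : ℝ := 2 / β with hp
  set q : ℝ := 2 / (2 - β) with hq
  have hpq : p.HolderConjugate q := by
    rw [Real.holderConjugate_iff]; constructor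
    · rw [hp, lt_div_iff₀ hβ0]; linarith
    · rw [hp, hq]
      field_simp
      ring
  have hq1 : 1 ≤ q := by rw [hq, le_div_iff₀ (by linarith)]; linarith
  have hp1 : 1 ≤ p := le_of_lt (Real.holderConjugate_iff.mp hpq).1
  have hq0 : 0 < q := by linarith
  -- the constant K
  set c : ℝ := C₄ / 2 with hc
  have hc0 : 0 < c := half_pos hC₄
  set K : ℝ := (C * c ^ (-(β/2))) ^ q with hK
  have hK0 : 0 < K := Real.rpow_pos_of_pos (mul_pos hC (Real.rpow_pos_of_pos hc0 _)) _
  -- the Gaussian-moment integral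
  have hInt : IntegrableOn (fun r : ℝ => r ^ (2 * n + 1) * Real.exp (-c * r ^ 2))
      (Set.Ioi 0) := by
    have := integrableOn_rpow_mul_exp_neg_mul_sq hc0
      (s := ((2 * n + 1 : ℕ) : ℝ)) ((neg_lt_zero.mpr one_pos).trans_le (Nat.cast_nonneg _))
    refine this.congr_fun (fun x hx => ?_) measurableSet_Ioi
    simp only [Real.rpow_natCast]
  set I : ℝ := ∫ r in Set.Ioi (0:ℝ), r ^ (2 * n + 1) * Real.exp (-c * r ^ 2) with hI
  have hI0 : 0 ≤ I := by
    refine setIntegral_nonneg measurableSet_Ioi fun x hx => ?_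
    have hx0 : (0:ℝ) ≤ x := le_of_lt hx
    positivity
  refine ⟨I + 1, by linarith, K, hK0, fun t ht => ?_⟩
  have ht0 : (0:ℝ) < t := lt_of_lt_of_le one_pos ht
  -- key pointwise inequality
  have key : ∀ r : ℝ, 0 < r → C * t ^ D * r ^ β ≤ c * r ^ 2 + K * t ^ (D / (2 - D)) := by
    intro r hr
    have hr0 : (0:ℝ) ≤ r := le_of_lt hr
    have hab : (c ^ (β/2) * r ^ β) * (C * t ^ D * c ^ (-(β/2))) = C * t ^ D * r ^ β := by
      have h1 : c ^ (β/2) * c ^ (-(β/2)) = 1 := by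
        rw [← Real.rpow_add hc0]; simp
      calc (c ^ (β/2) * r ^ β) * (C * t ^ D * c ^ (-(β/2)))
          = (c ^ (β/2) * c ^ (-(β/2))) * (C * t ^ D * r ^ β) := by ring
        _ = C * t ^ D * r ^ β := by rw [h1, one_mul]
    have hyoung := Real.young_inequality_of_nonneg
      (a := c ^ (β/2) * r ^ β) (b := C * t ^ D * c ^ (-(β/2)))
      (mul_nonneg (Real.rpow_nonneg hc0.le _) (Real.rpow_nonneg hr0 _))
      (by positivity) hpq
    rw [hab] at hyoung
    have ha : (c ^ (β/2) * r ^ β) ^ p = c * r ^ 2 := by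
      rw [Real.mul_rpow (Real.rpow_nonneg hc0.le _) (Real.rpow_nonneg hr0 _),
        ← Real.rpow_natCast r 2, ← Real.rpow_mul hc0.le, ← Real.rpow_mul hr0]
      rw [hp]
      rw [show β / 2 * (2 / β) = 1 by field_simp, show β * (2 / β) = 2 by field_simp]
      norm_num
    have hb : (C * t ^ D * c ^ (-(β/2))) ^ q = K * t ^ (D / (2 - D)) := by
      rw [show C * t ^ D * c ^ (-(β/2)) = (C * c ^ (-(β/2))) * t ^ D by ring,
        Real.mul_rpow (by positivity) (Real.rpow_nonneg ht0.le _),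
        ← Real.rpow_mul ht0.le, hK]
      congr 1
      have h2D : (0:ℝ) < 2 - D := by linarith
      have h2β : (2:ℝ) - β = 2 * (2 - D) := by rw [hβD]; ring
      have h22 : (2:ℝ) / (2 * (2 - D)) = 1 / (2 - D) := by
        rw [div_eq_div_iff (by linarith) (by linarith)]; ring
      rw [hq, h2β, h22, mul_one_div]
    rw [ha, hb] at hyoung
    have h1 : c * r ^ 2 / p ≤ c * r ^ 2 := by
      apply div_le_self (by positivity) hp1
    have h2 : K * t ^ (D / (2 - D)) / q ≤ K * t ^ (D / (2 - D)) := by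
      apply div_le_self (by positivity) hq1
    linarith
  -- bound the integrand
  have hexp : (0:ℝ) ≤ Real.exp (K * t ^ (D / (2 - D))) := (Real.exp_pos _).le
  calc (∫⁻ r in Set.Ioi (0 : ℝ), ENNReal.ofReal (r ^ (2 * n + 1) *
          Real.exp (C * t ^ D * r ^ β - C₄ * r ^ 2)))
      ≤ ∫⁻ r in Set.Ioi (0 : ℝ), ENNReal.ofReal (Real.exp (K * t ^ (D / (2 - D))) *
          (r ^ (2 * n + 1) * Real.exp (-c * r ^ 2))) := by
        refine lintegral_mono_ae ((ae_restrict_iff' measurableSet_Ioi).mpr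
          (Filter.Eventually.of_forall fun r hr => ?_))
        apply ENNReal.ofReal_le_ofReal
        have hr0 : (0:ℝ) ≤ r := le_of_lt hr
        rw [show Real.exp (K * t ^ (D / (2 - D))) * (r ^ (2 * n + 1) *
            Real.exp (-c * r ^ 2)) = r ^ (2 * n + 1) *
            (Real.exp (K * t ^ (D / (2 - D))) * Real.exp (-c * r ^ 2)) by ring,
          ← Real.exp_add]
        apply mul_le_mul_of_nonneg_left _ (by positivity)
        apply Real.exp_le_exp.mpr
        have := key r hr
        have hcr : c = C₄ / 2 := hc
        nlinarith [this]
    _ = ENNReal.ofReal (Real.exp (K * t ^ (D / (2 - D)))) *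
          ∫⁻ r in Set.Ioi (0 : ℝ), ENNReal.ofReal (r ^ (2 * n + 1) *
            Real.exp (-c * r ^ 2)) := by
        simp_rw [ENNReal.ofReal_mul hexp]
        exact lintegral_const_mul' _ _ ENNReal.ofReal_ne_top
    _ = ENNReal.ofReal (Real.exp (K * t ^ (D / (2 - D)))) * ENNReal.ofReal I := by
        congr 1
        rw [← ofReal_integral_eq_lintegral_ofReal hInt
          ((ae_restrict_iff' measurableSet_Ioi).mpr
            (Filter.Eventually.of_forall fun r hr => by
              have hr0 : (0:ℝ) ≤ r := le_of_lt hr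
              positivity))]
    _ ≤ ENNReal.ofReal ((I + 1) * Real.exp (K * t ^ (D / (2 - D)))) := by
        rw [← ENNReal.ofReal_mul hexp]
        apply ENNReal.ofReal_le_ofReal
        nlinarith [Real.exp_pos (K * t ^ (D / (2 - D)))]
end
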